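/- arXiv:2504.09616 — 4 statements merged into one kernel-verified Lean document; each statement's English description precedes it below -/
import Mathlib

section
/- Under the same hypotheses, if b₀ > b₁* then the solution of ḃ = f(b) converges to b₂* as t → ∞; in particular lim b(t) ≠ 0 if and only if b₀ ≥ b₁*. -/
open Set Filter

lemma barrier_lower {F b : ℝ → ℝ} (hb : ∀ t, HasDerivAt b (F (b t)) t)
    {l : ℝ} (hF : 0 < F l) {t₀ T : ℝ} (h0 : l < b t₀) (hT : t₀ ≤ T) : l < b T := by
  by_contra hle
  push_neg at hle
  have hcont : Continuous b := continuous_iff_continuousAt.mpr fun t => (hb t).continuousAt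
  set S : Set ℝ := Icc t₀ T ∩ b ⁻¹' Iic l with hS
  have hSc : IsClosed S := isClosed_Icc.inter (isClosed_Iic.preimage hcont)
  have hne : S.Nonempty := ⟨T, ⟨hT, le_rfl⟩, hle⟩
  have hbdd : BddBelow S := ⟨t₀, fun t ht => ht.1.1⟩
  set c := sInf S with hc
  have hcS : c ∈ S := hSc.csInf_mem hne hbdd
  have hct₀ : t₀ < c := by
    have h1 : t₀ ≤ c := le_csInf hne fun t ht => ht.1.1
    rcases h1.lt_or_eq with h | h
    · exact h
    · exfalso
      have h2 : b c ≤ l := hcS.2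
      rw [← h] at h2
      exact absurd h2 (not_le.mpr h0)
  have hbefore : ∀ t, t₀ ≤ t → t < c → l < b t := by
    intro t h1 h2
    by_contra hb'
    push_neg at hb'
    exact absurd (csInf_le hbdd ⟨⟨h1, h2.le.trans hcS.1.2⟩, hb'⟩) (not_le.mpr h2)
  have hbc : b c = l := by
    refine le_antisymm hcS.2 ?_
    refine ge_of_tendsto ((hcont.tendsto c).mono_left nhdsWithin_le_nhds :
      Tendsto b (nhdsWithin c (Iio c)) (nhds (b c))) ?_
    filter_upwards [Ioo_mem_nhdsLT_of_mem (⟨hct₀, le_rfl⟩ : c ∈ Ioc t₀ c)] with t ht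
    exact (hbefore t ht.1.le ht.2).le
  have hslope : Tendsto (slope b c) (nhdsWithin c (Iio c)) (nhds (F (b c))) :=
    (hasDerivAt_iff_tendsto_slope.mp (hb c)).mono_left
      (nhdsWithin_mono c fun x hx => ne_of_lt hx)
  have h3 : F (b c) ≤ 0 := by
    refine le_of_tendsto hslope ?_
    filter_upwards [Ioo_mem_nhdsLT_of_mem (⟨hct₀, le_rfl⟩ : c ∈ Ioc t₀ c)] with t ht
    rw [slope_def_field]
    apply div_nonpos_of_nonneg_of_nonpos
    · rw [hbc]; exact sub_nonneg.mpr (hbefore t ht.1.le ht.2).le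
    · linarith [ht.2]
  rw [hbc] at h3
  exact absurd hF (not_lt.mpr h3)

lemma barrier_upper {F b : ℝ → ℝ} (hb : ∀ t, HasDerivAt b (F (b t)) t)
    {u : ℝ} (hF : F u < 0) {t₀ T : ℝ} (h0 : b t₀ < u) (hT : t₀ ≤ T) : b T < u := by
  have hb' : ∀ t, HasDerivAt (fun t => -(b t)) ((fun y => -F (-y)) (-(b t))) t := by
    intro t; show HasDerivAt (fun t => -(b t)) (-F (-(-(b t)))) t; rw [neg_neg]; exact (hb t).neg
  have := barrier_lower (F := fun y => -F (-y)) (b := fun t => -(b t)) hb' (l := -u)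
    (by simp only [neg_neg]; linarith) (t₀ := t₀) (T := T) (neg_lt_neg h0) hT
  have h2 : -u < -(b T) := this
  linarith

lemma drift_up {F b : ℝ → ℝ} (hb : ∀ t, HasDerivAt b (F (b t)) t)
    {c A B T : ℝ} (hc : 0 < c) (hF : ∀ x ∈ Icc A B, c ≤ F x)
    (hmem : ∀ t, T ≤ t → b t ∈ Icc A B) : False := by
  have hg : ∀ t, HasDerivAt (fun t => b t - c * t) (F (b t) - c) t := by
    intro t
    exact (hb t).sub (by simpa using (hasDerivAt_id t).const_mul c)
  have hcont : Continuous b := continuous_iff_continuousAt.mpr fun t => (hb t).continuousAt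
  have hmono : MonotoneOn (fun t => b t - c * t) (Ici T) := by
    refine monotoneOn_of_deriv_nonneg (convex_Ici T) ?_ ?_ ?_
    · exact Continuous.continuousOn (by exact hcont.sub (continuous_const.mul continuous_id))
    · exact fun t ht => (hg t).differentiableAt.differentiableWithinAt
    · intro t ht
      rw [interior_Ici] at ht
      rw [(hg t).deriv]
      linarith [hF _ (hmem t (le_of_lt ht))]
  set t₁ := T + (B + 1 - b T) / c with ht₁
  have hBT : b T ≤ B := (hmem T le_rfl).2
  have hT₁ : T ≤ t₁ := by
    rw [ht₁]; nlinarith [div_nonneg (by linarith : (0:ℝ) ≤ B + 1 - b T) hc.le]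
  have hmm := hmono (self_mem_Ici) (mem_Ici.mpr hT₁) hT₁
  have hcan : c * ((B + 1 - b T) / c) = B + 1 - b T := mul_div_cancel₀ _ hc.ne'
  have hb₁ : b t₁ ≤ B := (hmem t₁ hT₁).2
  simp only [ht₁] at hmm hb₁
  nlinarith [hmm, hcan, hb₁]

lemma drift_down {F b : ℝ → ℝ} (hb : ∀ t, HasDerivAt b (F (b t)) t)
    {c A B T : ℝ} (hc : 0 < c) (hF : ∀ x ∈ Icc A B, F x ≤ -c)
    (hmem : ∀ t, T ≤ t → b t ∈ Icc A B) : False := by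
  have hb' : ∀ t, HasDerivAt (fun t => -(b t)) ((fun y => -F (-y)) (-(b t))) t := by
    intro t; show HasDerivAt (fun t => -(b t)) (-F (-(-(b t)))) t; rw [neg_neg]; exact (hb t).neg
  apply drift_up (F := fun y => -F (-y)) (b := fun t => -(b t)) hb' (A := -B) (B := -A)
    (T := T) hc
  · intro x hx
    have hmem' : -x ∈ Icc A B := ⟨by linarith [hx.2], by linarith [hx.1]⟩
    have := hF _ hmem'
    show c ≤ -F (-x)
    linarith
  · intro t ht
    have := hmem t ht
    exact ⟨neg_le_neg this.2, neg_le_neg this.1⟩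

set_option maxHeartbeats 1000000 in
theorem immune_failure_above_threshold
    (α β K N : ℝ) (hα : 0 < α) (hβ : 0 < β) (hK : 0 < K) (hN : 0 < N)
    (hβα : α < β) (hKN : K < N)
    (q n : ℝ) (hq : q = N / K) (hn : n = β / α)
    (hD : 0 < (q - 1) ^ 2 - 4 * q * (n - 1))
    (b₁ b₂ : ℝ)
    (hb₁ : b₁ = K / 2 * ((q - 1) - Real.sqrt ((q - 1) ^ 2 - 4 * q * (n - 1))))
    (hb₂ : b₂ = K / 2 * ((q - 1) + Real.sqrt ((q - 1) ^ 2 - 4 * q * (n - 1))))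
    (b : ℝ → ℝ)
    (hode : ∀ t : ℝ, HasDerivAt b
      (α * b t * (1 - b t / N) - β * K * b t / (K + b t)) t)
    (b₀ : ℝ) (hb0 : b 0 = b₀) (hb₀pos : 0 < b₀) :
    (b₁ < b₀ → Filter.Tendsto b Filter.atTop (nhds b₂)) ∧
      (¬ Filter.Tendsto b Filter.atTop (nhds 0) ↔ b₁ ≤ b₀) := by
  subst hb0
  have hq1 : 1 < q := by rw [hq]; exact (one_lt_div hK).mpr hKN
  have hn1 : 1 < n := by rw [hn]; exact (one_lt_div hα).mpr hβα
  set s := Real.sqrt ((q - 1) ^ 2 - 4 * q * (n - 1)) with hsdef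
  have hs2 : s ^ 2 = (q - 1) ^ 2 - 4 * q * (n - 1) := Real.sq_sqrt hD.le
  have hspos : 0 < s := Real.sqrt_pos.mpr hD
  have hslt : s < q - 1 := by nlinarith [hs2]
  have hb₁pos : 0 < b₁ := by rw [hb₁]; apply mul_pos (by positivity); linarith
  have hb₁₂ : b₁ < b₂ := by rw [hb₁, hb₂]; nlinarith
  have hb₂pos : 0 < b₂ := lt_trans hb₁pos hb₁₂
  have hKq : K * q = N := by rw [hq]; field_simp
  have hβn : β = n * α := by rw [hn]; field_simp
  have hsum : b₁ + b₂ = N - K := by rw [hb₁, hb₂]; linear_combination hKq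
  have hprod : b₁ * b₂ = K * N * (n - 1) := by
    rw [hb₁, hb₂]; linear_combination (-(K^2)/4) * hs2 + (K*(n-1)) * hKq
  set F : ℝ → ℝ := fun x => α * x * (1 - x / N) - β * K * x / (K + x) with hFdef
  have hode' : ∀ t, HasDerivAt b (F (b t)) t := hode
  have hcont : Continuous b := continuous_iff_continuousAt.mpr fun t => (hode' t).continuousAt
  have hfac : ∀ x : ℝ, K + x ≠ 0 → F x = α * x * ((x - b₁) * (b₂ - x)) / (N * (K + x)) := by
    intro x hx
    show α * x * (1 - x / N) - β * K * x / (K + x) = _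
    field_simp
    linear_combination (-(α*x^2)) * hsum + (α*x) * hprod + (-(K*x*N)) * hβn
  have hFpos_mid : ∀ x, b₁ < x → x < b₂ → 0 < F x := by
    intro x h1 h2
    have hx : (0:ℝ) < K + x := by linarith
    rw [hfac x hx.ne']
    exact div_pos (mul_pos (mul_pos hα (by linarith)) (mul_pos (by linarith) (by linarith)))
      (mul_pos hN hx)
  have hFneg_hi : ∀ x, b₂ < x → F x < 0 := by
    intro x h1
    have hx : (0:ℝ) < K + x := by linarith
    rw [hfac x hx.ne']
    apply div_neg_of_neg_of_pos _ (mul_pos hN hx)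
    have h2 : (x - b₁) * (b₂ - x) < 0 := mul_neg_of_pos_of_neg (by linarith) (by linarith)
    have h3 : 0 < α * x := mul_pos hα (by linarith)
    exact mul_neg_of_pos_of_neg h3 h2
  have hFneg_lo : ∀ x, 0 < x → x < b₁ → F x < 0 := by
    intro x h1 h2
    have hx : (0:ℝ) < K + x := by linarith
    rw [hfac x hx.ne']
    apply div_neg_of_neg_of_pos _ (mul_pos hN hx)
    have h3 : (x - b₁) * (b₂ - x) < 0 := mul_neg_of_neg_of_pos (by linarith) (by linarith)
    have h4 : 0 < α * x := mul_pos hα h1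
    exact mul_neg_of_pos_of_neg h4 h3
  have hFpos_neg : ∀ x, -K < x → x < 0 → 0 < F x := by
    intro x h1 h2
    have hx : (0:ℝ) < K + x := by linarith
    rw [hfac x hx.ne']
    apply div_pos _ (mul_pos hN hx)
    have h3 : (x - b₁) * (b₂ - x) < 0 := mul_neg_of_neg_of_pos (by linarith) (by linarith)
    have h4 : α * x < 0 := mul_neg_of_pos_of_neg hα h2
    exact mul_pos_of_neg_of_neg h4 h3
  have hFb₁ : F b₁ = 0 := by
    have hx : (0:ℝ) < K + b₁ := by linarith
    rw [hfac b₁ hx.ne']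
    simp
  have hFcont : ∀ A B : ℝ, -K < A → ContinuousOn F (Icc A B) := by
    intro A B hA
    show ContinuousOn (fun x => α * x * (1 - x / N) - β * K * x / (K + x)) (Icc A B)
    apply ContinuousOn.sub
    · fun_prop
    · apply ContinuousOn.div (by fun_prop) (by fun_prop)
      intro x hx
      have := hx.1
      intro h
      have : x = -K := by linarith
      linarith [hx.1, this ▸ hx.1]
  -- Part 1 : convergence to b₂ when b 0 > b₁
  have part1 : b₁ < b 0 → Tendsto b atTop (nhds b₂) := by
    intro h0
    set l₀ := (b₁ + min (b 0) b₂) / 2 with hl₀def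
    have hminb : b₁ < min (b 0) b₂ := lt_min h0 hb₁₂
    have hl₀1 : b₁ < l₀ := by rw [hl₀def]; linarith
    have hl₀2 : l₀ < b₂ := by
      have : min (b 0) b₂ ≤ b₂ := min_le_right _ _
      rw [hl₀def]; linarith
    have hl₀3 : l₀ < b 0 := by
      have : min (b 0) b₂ ≤ b 0 := min_le_left _ _
      rw [hl₀def]; linarith
    have hlow : ∀ t, 0 ≤ t → l₀ < b t :=
      fun t ht => barrier_lower hode' (hFpos_mid l₀ hl₀1 hl₀2) hl₀3 ht
    set u₀ := max (b 0) b₂ + 1 with hu₀def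
    have hu₀1 : b₂ < u₀ := by
      have : b₂ ≤ max (b 0) b₂ := le_max_right _ _
      rw [hu₀def]; linarith
    have hu₀2 : b 0 < u₀ := by
      have : b 0 ≤ max (b 0) b₂ := le_max_left _ _
      rw [hu₀def]; linarith
    have hhigh : ∀ t, 0 ≤ t → b t < u₀ :=
      fun t ht => barrier_upper hode' (hFneg_hi u₀ hu₀1) hu₀2 ht
    rw [Metric.tendsto_atTop]
    intro ε hε
    set l := max l₀ (b₂ - ε) with hldef
    have hl1 : b₁ < l := lt_of_lt_of_le hl₀1 (le_max_left _ _)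
    have hl2 : l < b₂ := by
      rw [hldef]; apply max_lt hl₀2 (by linarith)
    have hFl : 0 < F l := hFpos_mid l hl1 hl2
    have hl₀l : l₀ ≤ l := le_max_left _ _
    have hexl : ∃ T, 0 ≤ T ∧ l < b T := by
      by_contra hcon
      push_neg at hcon
      obtain ⟨x₀, hx₀mem, hx₀min⟩ := isCompact_Icc.exists_isMinOn (nonempty_Icc.mpr hl₀l)
        (hFcont l₀ l (by linarith))
      exact drift_up hode'
        (hFpos_mid x₀ (lt_of_lt_of_le hl₀1 hx₀mem.1) (lt_of_le_of_lt hx₀mem.2 hl2))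
        (fun x hx => hx₀min hx)
        (fun t ht => ⟨(hlow t ht).le, hcon t ht⟩)
    obtain ⟨T₁, hT₁0, hT₁⟩ := hexl
    have hlafter : ∀ t, T₁ ≤ t → l < b t := fun t ht => barrier_lower hode' hFl hT₁ ht
    set u := b₂ + ε with hudef
    have hFu : F u < 0 := hFneg_hi u (by rw [hudef]; linarith)
    have hexu : ∃ T, 0 ≤ T ∧ b T < u := by
      rcases lt_or_ge (b 0) u with h | h
      · exact ⟨0, le_rfl, h⟩
      · by_contra hcon
        push_neg at hcon
        have huu₀ : u ≤ u₀ := by linarith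
        obtain ⟨x₀, hx₀mem, hx₀max⟩ := isCompact_Icc.exists_isMaxOn (nonempty_Icc.mpr huu₀)
          (hFcont u u₀ (by rw [hudef]; linarith))
        have hx₀neg : F x₀ < 0 := hFneg_hi x₀ (by
          have := hx₀mem.1; rw [hudef] at this; linarith)
        refine drift_down hode' (c := -F x₀) (by linarith) ?_
          (fun t ht => ⟨hcon t ht, (hhigh t ht).le⟩)
        intro x hx
        have h5 : F x ≤ F x₀ := hx₀max hx
        linarith
    obtain ⟨T₂, hT₂0, hT₂⟩ := hexu
    have huafter : ∀ t, T₂ ≤ t → b t < u := fun t ht => barrier_upper hode' hFu hT₂ ht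
    refine ⟨max T₁ T₂, fun t ht => ?_⟩
    have h1 := hlafter t (le_trans (le_max_left _ _) ht)
    have h2 := huafter t (le_trans (le_max_right _ _) ht)
    have h3 : b₂ - ε ≤ l := le_max_right _ _
    rw [Real.dist_eq, abs_lt]
    constructor
    · rw [hudef] at h2; linarith
    · rw [hudef] at h2; linarith
  -- Part 2a : convergence to 0 when b 0 < b₁
  have part2a : b 0 < b₁ → Tendsto b atTop (nhds 0) := by
    intro h0
    set u₀ := (b 0 + b₁) / 2 with hu₀def
    have hu₀1 : 0 < u₀ := by rw [hu₀def]; linarith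
    have hu₀2 : u₀ < b₁ := by rw [hu₀def]; linarith
    have hu₀3 : b 0 < u₀ := by rw [hu₀def]; linarith
    have hhigh : ∀ t, 0 ≤ t → b t < u₀ :=
      fun t ht => barrier_upper hode' (hFneg_lo u₀ hu₀1 hu₀2) hu₀3 ht
    rw [Metric.tendsto_atTop]
    intro ε hε
    set l := -(min ε K) / 2 with hldef
    have hl1 : -K < l := by
      have : min ε K ≤ K := min_le_right _ _
      rw [hldef]; nlinarith [lt_min hε hK]
    have hl2 : l < 0 := by
      have := lt_min hε hK
      rw [hldef]; linarith
    have hl3 : -ε < l := by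
      have : min ε K ≤ ε := min_le_left _ _
      rw [hldef]; linarith
    have hlow : ∀ t, 0 ≤ t → l < b t :=
      fun t ht => barrier_lower hode' (hFpos_neg l hl1 hl2) (by linarith) ht
    set u := min (ε / 2) u₀ with hudef
    have hu1 : 0 < u := lt_min (by linarith) hu₀1
    have hu2 : u < b₁ := lt_of_le_of_lt (min_le_right _ _) hu₀2
    have hu3 : u ≤ ε / 2 := min_le_left _ _
    have hFu : F u < 0 := hFneg_lo u hu1 hu2
    have hexu : ∃ T, 0 ≤ T ∧ b T < u := by
      by_contra hcon
      push_neg at hcon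
      have huu₀ : u ≤ u₀ := min_le_right _ _
      obtain ⟨x₀, hx₀mem, hx₀max⟩ := isCompact_Icc.exists_isMaxOn (nonempty_Icc.mpr huu₀)
        (hFcont u u₀ (by linarith))
      have hx₀neg : F x₀ < 0 := hFneg_lo x₀ (lt_of_lt_of_le hu1 hx₀mem.1)
        (lt_of_le_of_lt hx₀mem.2 hu₀2)
      refine drift_down hode' (c := -F x₀) (by linarith) ?_
        (fun t ht => ⟨hcon t ht, (hhigh t ht).le⟩)
      intro x hx
      have h5 : F x ≤ F x₀ := hx₀max hx
      linarith
    obtain ⟨T₂, hT₂0, hT₂⟩ := hexu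
    have huafter : ∀ t, T₂ ≤ t → b t < u := fun t ht => barrier_upper hode' hFu hT₂ ht
    refine ⟨T₂, fun t ht => ?_⟩
    have h1 := hlow t (le_trans hT₂0 ht)
    have h2 := huafter t ht
    rw [Real.dist_eq, sub_zero, abs_lt]
    constructor
    · linarith
    · linarith
  -- Part 2b : if b 0 = b₁ then b is constant (uniqueness), so does not tend to 0
  have part2b : b 0 = b₁ → ¬ Tendsto b atTop (nhds 0) := by
    intro h0 htend
    have hlowK : ∀ t, 0 ≤ t → -(K / 2) < b t :=
      fun t ht => barrier_lower hode' (hFpos_neg (-(K/2)) (by linarith) (by linarith))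
        (by rw [h0]; linarith) ht
    obtain ⟨T₀, hT₀⟩ := Metric.tendsto_atTop.mp htend (b₁ / 2) (by linarith)
    set T := max T₀ 0 with hTdef
    have hT0 : 0 ≤ T := le_max_right _ _
    have hbT : |b T| < b₁ / 2 := by
      have := hT₀ T (le_max_left _ _)
      rwa [Real.dist_eq, sub_zero] at this
    have himg : IsCompact (b '' Icc 0 T) := (isCompact_Icc).image hcont
    obtain ⟨m0, hm0⟩ := himg.bddBelow
    obtain ⟨M0, hM0⟩ := himg.bddAbove
    set m := max m0 (-(K / 2)) with hmdef
    have hmem : ∀ t, t ∈ Icc 0 T → b t ∈ Icc m M0 := by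
      intro t ht
      constructor
      · apply max_le (hm0 ⟨t, ht, rfl⟩) (hlowK t ht.1).le
      · exact hM0 ⟨t, ht, rfl⟩
    have hb0mem : b 0 ∈ Icc m M0 := hmem 0 ⟨le_rfl, hT0⟩
    have hmK : -K < m := lt_of_lt_of_le (by linarith) (le_max_right _ _)
    -- derivative of F and Lipschitz bound on Icc m M0
    set F' : ℝ → ℝ := fun x => α - 2 * α * x / N - β * K ^ 2 / (K + x) ^ 2 with hF'def
    have hder : ∀ x : ℝ, K + x ≠ 0 → HasDerivAt F (F' x) x := by
      intro x hx
      have ha : HasDerivAt (fun y : ℝ => α * y) (α * 1) x := (hasDerivAt_id x).const_mul α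
      have hb2 : HasDerivAt (fun y : ℝ => 1 - y / N) (0 - 1 / N) x :=
        (hasDerivAt_const x 1).sub ((hasDerivAt_id x).div_const N)
      have h1 := ha.mul hb2
      have hc : HasDerivAt (fun y : ℝ => β * K * y) (β * K * 1) x :=
        (hasDerivAt_id x).const_mul (β * K)
      have hd : HasDerivAt (fun y : ℝ => K + y) (0 + 1) x :=
        (hasDerivAt_const x K).add (hasDerivAt_id x)
      have h2 := hc.div hd hx
      have h3 := h1.sub h2
      have heq : F' x = (α * 1 * (1 - x / N) + (fun y : ℝ => α * y) x * (0 - 1 / N)) -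
          (β * K * 1 * ((fun y : ℝ => K + y) x) - (fun y : ℝ => β * K * y) x * (0 + 1)) /
            ((fun y : ℝ => K + y) x) ^ 2 := by
        show F' x = (α * 1 * (1 - x / N) + (α * x) * (0 - 1 / N)) -
          (β * K * 1 * (K + x) - (β * K * x) * (0 + 1)) / (K + x) ^ 2
        rw [hF'def]
        field_simp
        ring
      rw [heq]
      exact h3
    have hF'cont : ContinuousOn (fun x => |F' x|) (Icc m M0) := by
      apply ContinuousOn.abs
      show ContinuousOn (fun x => α - 2 * α * x / N - β * K ^ 2 / (K + x) ^ 2) (Icc m M0)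
      apply ContinuousOn.sub (by fun_prop)
      apply ContinuousOn.div (by fun_prop) (by fun_prop)
      intro x hx
      have h1 : -K < x := lt_of_lt_of_le hmK hx.1
      exact pow_ne_zero 2 (by linarith : K + x ≠ 0)
    have hneIcc : (Icc m M0).Nonempty := ⟨b 0, hb0mem⟩
    obtain ⟨x₀, hx₀mem, hx₀max⟩ := isCompact_Icc.exists_isMaxOn hneIcc hF'cont
    have hlip : LipschitzOnWith ‖F' x₀‖₊ F (Icc m M0) := by
      apply (convex_Icc m M0).lipschitzOnWith_of_nnnorm_hasDerivWithin_le (f' := F')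
      · intro x hx
        have h1 : -K < x := lt_of_lt_of_le hmK hx.1
        exact (hder x (by linarith : K + x ≠ 0)).hasDerivWithinAt
      · intro x hx
        rw [← NNReal.coe_le_coe]
        simp only [coe_nnnorm, Real.norm_eq_abs]
        exact hx₀max hx
    have huniq := ODE_solution_unique_of_mem_Icc_right
      (v := fun _ : ℝ => F) (s := fun _ : ℝ => Icc m M0) (K := ‖F' x₀‖₊)
      (f := b) (g := fun _ => b₁) (a := 0) (b := T)
      (fun _ _ => hlip)
      hcont.continuousOn
      (fun t _ => (hode' t).hasDerivWithinAt)
      (fun t ht => hmem t ⟨ht.1, ht.2.le⟩)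
      continuousOn_const
      (fun t _ => by
        show HasDerivWithinAt (fun _ => b₁) (F b₁) (Ici t) t
        rw [hFb₁]
        exact (hasDerivAt_const t b₁).hasDerivWithinAt)
      (fun t _ => h0 ▸ hb0mem)
      h0
    have hbTb₁ : b T = b₁ := huniq (right_mem_Icc.mpr hT0)
    rw [hbTb₁, abs_of_pos hb₁pos] at hbT
    linarith
  refine ⟨part1, ⟨?_, ?_⟩⟩
  · intro h
    by_contra hcon
    push_neg at hcon
    exact h (part2a hcon)
  · intro h htend
    rcases h.lt_or_eq with h1 | h1
    · have := tendsto_nhds_unique (part1 h1) htend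
      linarith
    · exact part2b h1.symm htend
end

section
/- Under a viable therapy (u(t) ≥ u_M for all t), every equilibrium (b̄, s̄) of the system ḃ = α·b·(1 − b/N) − I(b)·b − D(u)·s, ṡ = α·s·(1 − b/N) − I(b)·s − D(u)·s − μ·s must satisfy s̄ = 0; consequently the equilibria are exactly (0,0), (b₁*, 0), (b₂*, 0). -/
theorem equilibria_under_viable_therapy
    (α β K N μ uM : ℝ) (hα : 0 < α) (hβ : 0 < β) (hK : 0 < K) (hN : 0 < N)
    (hμ : 0 < μ) (huM : 0 < uM) (hβα : α < β) (hKN : K < N)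
    (q n : ℝ) (hq : q = N / K) (hn : n = β / α)
    (hD : 0 < (q - 1) ^ 2 - 4 * q * (n - 1))
    (b₁ b₂ : ℝ)
    (hb₁ : b₁ = K / 2 * ((q - 1) - Real.sqrt ((q - 1) ^ 2 - 4 * q * (n - 1))))
    (hb₂ : b₂ = K / 2 * ((q - 1) + Real.sqrt ((q - 1) ^ 2 - 4 * q * (n - 1))))
    (Dfun : ℝ → ℝ) (hDα : ∀ v, uM ≤ v → α ≤ Dfun v)
    (v : ℝ) (hv : uM ≤ v)
    (bEq sEq : ℝ) (hbEq : 0 ≤ bEq) (hbEqN : bEq ≤ N) (hsEq : 0 ≤ sEq)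
    (heqb : α * bEq * (1 - bEq / N) - (β * K / (K + bEq)) * bEq - Dfun v * sEq = 0)
    (heqs : α * sEq * (1 - bEq / N) - (β * K / (K + bEq)) * sEq
      - Dfun v * sEq - μ * sEq = 0) :
    sEq = 0 ∧ (bEq = 0 ∨ bEq = b₁ ∨ bEq = b₂) := by
  have hKb : 0 < K + bEq := by linarith
  have hI : 0 < β * K / (K + bEq) := by positivity
  have hDv : α ≤ Dfun v := hDα v hv
  have hbN : 0 ≤ bEq / N := by positivity
  -- the factor multiplying sEq in heqs is negative
  have hfac : α * (1 - bEq / N) - β * K / (K + bEq) - Dfun v - μ < 0 := by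
    nlinarith [mul_nonneg hα.le hbN]
  have hs0 : sEq = 0 := by
    rcases hsEq.lt_or_eq with h | h
    · exfalso
      have := heqs
      nlinarith [mul_pos h (neg_pos.mpr hfac)]
    · exact h.symm
  subst hs0
  refine ⟨rfl, ?_⟩
  have heqb' : α * bEq * (1 - bEq / N) - (β * K / (K + bEq)) * bEq = 0 := by
    linarith [heqb]
  have key : bEq * (α * (N - bEq) * (K + bEq) - β * K * N) = 0 := by
    have hN' : (N : ℝ) ≠ 0 := hN.ne'
    have hKb' : (K + bEq) ≠ 0 := hKb.ne'
    field_simp at heqb'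
    linear_combination heqb'
  rcases mul_eq_zero.mp key with h | h
  · exact Or.inl h
  · right
    set disc : ℝ := (q - 1) ^ 2 - 4 * q * (n - 1) with hdisc
    have hs2 : Real.sqrt disc ^ 2 = disc := Real.sq_sqrt hD.le
    have hprod : (bEq - b₁) * (bEq - b₂) = 0 := by
      have hK' : (K : ℝ) ≠ 0 := hK.ne'
      have hα' : (α : ℝ) ≠ 0 := hα.ne'
      rw [hb₁, hb₂]
      have hq' : q * K = N := by rw [hq]; field_simp
      have hn' : n * α = β := by rw [hn]; field_simp
      have hs2' : Real.sqrt disc ^ 2 = (q - 1) ^ 2 - 4 * q * (n - 1) :=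
        hs2.trans hdisc
      have key2 : α * ((bEq - K / 2 * (q - 1 - Real.sqrt disc))
          * (bEq - K / 2 * (q - 1 + Real.sqrt disc))) = 0 := by
        linear_combination (-(K ^ 2) * α / 4) * hs2' - h
          + (α * (-bEq - K + K * n)) * hq' + (K * N) * hn'
      exact (mul_eq_zero.mp key2).resolve_left hα'
    rcases mul_eq_zero.mp hprod with h1 | h2
    · exact Or.inl (by linarith)
    · exact Or.inr (by linarith)
end

section
/- There exists ε* > 0 such that the horizontal segment {(b, ε*) : b ∈ [b₁*, b₂*]} intersects the graph of ψ at exactly two points. -/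
theorem horizontal_segment_two_intersections
    (α β K N Dmax : ℝ) (hα : 0 < α) (hβ : 0 < β) (hK : 0 < K) (hN : 0 < N)
    (hDmax : 0 < Dmax) (hβα : α < β) (hKN : K < N)
    (q n : ℝ) (hq : q = N / K) (hn : n = β / α)
    (hD : 0 < (q - 1) ^ 2 - 4 * q * (n - 1))
    (b₁ b₂ : ℝ)
    (hb₁ : b₁ = K / 2 * ((q - 1) - Real.sqrt ((q - 1) ^ 2 - 4 * q * (n - 1))))
    (hb₂ : b₂ = K / 2 * ((q - 1) + Real.sqrt ((q - 1) ^ 2 - 4 * q * (n - 1))))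
    (ψ : ℝ → ℝ)
    (hψ : ∀ b : ℝ, ψ b = (α * b * (1 - b / N) - β * K * b / (K + b)) / Dmax) :
    ∃ ε : ℝ, 0 < ε ∧ ∃ x y : ℝ, x ∈ Set.Icc b₁ b₂ ∧ y ∈ Set.Icc b₁ b₂ ∧
      x ≠ y ∧ ψ x = ε ∧ ψ y = ε ∧
      ∀ z ∈ Set.Icc b₁ b₂, ψ z = ε → z = x ∨ z = y := by
  -- basic algebraic facts about b₁, b₂
  set s := Real.sqrt ((q - 1) ^ 2 - 4 * q * (n - 1)) with hsdef
  have hs2 : s ^ 2 = (q - 1) ^ 2 - 4 * q * (n - 1) := Real.sq_sqrt hD.le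
  have hspos : 0 < s := Real.sqrt_pos.mpr hD
  have hqK : q * K = N := by rw [hq]; field_simp
  have hnα : n * α = β := by rw [hn]; field_simp
  have hq1 : 1 < q := by rw [hq]; rw [lt_div_iff₀ hK]; linarith
  have hn1 : 1 < n := by rw [hn]; rw [lt_div_iff₀ hα]; linarith
  have hslt : s < q - 1 := by nlinarith [hs2, hspos, hq1, hn1]
  have hprod : α * (b₁ * b₂) = K * N * (β - α) := by
    have h1 : b₁ * b₂ = K ^ 2 * q * (n - 1) := by
      rw [hb₁, hb₂]; linear_combination (-(K ^ 2 : ℝ) / 4) * hs2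
    rw [h1]; linear_combination (α * K * (n - 1)) * hqK + (K * N) * hnα
  have hsum : b₁ + b₂ = N - K := by rw [hb₁, hb₂]; linear_combination hqK
  have hb₁pos : 0 < b₁ := by rw [hb₁]; nlinarith
  have hb₁₂ : b₁ < b₂ := by rw [hb₁, hb₂]; nlinarith
  have hND : 0 < N * Dmax := mul_pos hN hDmax
  -- key identity
  have hId : ∀ z : ℝ, K + z ≠ 0 →
      ψ z * ((K + z) * (N * Dmax)) = -(α * (z * (z - b₁) * (z - b₂))) := by
    intro z hz
    have hψz : ψ z * ((K + z) * (N * Dmax)) =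
        α * z * (N - z) * (K + z) - β * K * z * N := by
      rw [hψ]; field_simp
    linear_combination hψz + (-(α * z ^ 2)) * hsum + z * hprod
  have hKb : ∀ z ∈ Set.Icc b₁ b₂, 0 < K + z := by
    intro z hz; have := hz.1; linarith
  -- endpoint values
  have hψb₁ : ψ b₁ = 0 := by
    have h := hId b₁ (by linarith : (0:ℝ) < K + b₁).ne'
    have h2 : (0:ℝ) < (K + b₁) * (N * Dmax) := by positivity
    have h3 : ψ b₁ * ((K + b₁) * (N * Dmax)) = 0 := by rw [h]; ring
    rcases mul_eq_zero.mp h3 with h4 | h4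
    · exact h4
    · exact absurd h4 h2.ne'
  have hψb₂ : ψ b₂ = 0 := by
    have hb₂pos : (0:ℝ) < K + b₂ := by linarith
    have h := hId b₂ hb₂pos.ne'
    have h2 : (0:ℝ) < (K + b₂) * (N * Dmax) := mul_pos hb₂pos hND
    have h3 : ψ b₂ * ((K + b₂) * (N * Dmax)) = 0 := by rw [h]; ring
    rcases mul_eq_zero.mp h3 with h4 | h4
    · exact h4
    · exact absurd h4 h2.ne'
  -- continuity
  have hcont : ContinuousOn ψ (Set.Icc b₁ b₂) := by
    have h : ContinuousOn
        (fun b => (α * b * (1 - b / N) - β * K * b / (K + b)) / Dmax)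
        (Set.Icc b₁ b₂) := by
      apply ContinuousOn.div _ continuousOn_const fun x _ => hDmax.ne'
      apply ContinuousOn.sub (by fun_prop)
      exact ContinuousOn.div (by fun_prop) (by fun_prop)
        (fun x hx => (hKb x hx).ne')
    exact h.congr fun x _ => hψ x
  -- maximum point
  obtain ⟨m, hm, hmax⟩ := isCompact_Icc.exists_isMaxOn
    (Set.nonempty_Icc.mpr hb₁₂.le) hcont
  have hmidmem : (b₁ + b₂) / 2 ∈ Set.Icc b₁ b₂ :=
    ⟨by linarith, by linarith⟩
  have hψmid : 0 < ψ ((b₁ + b₂) / 2) := by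
    have h := hId ((b₁ + b₂) / 2) (hKb _ hmidmem).ne'
    have h1 := hKb _ hmidmem
    have hApos : 0 < α * ((b₁ + b₂) / 2 * ((b₂ - b₁) / 2) * ((b₂ - b₁) / 2)) :=
      mul_pos hα (mul_pos (mul_pos (by linarith) (by linarith)) (by linarith))
    have h2 : ψ ((b₁ + b₂) / 2) * ((K + (b₁ + b₂) / 2) * (N * Dmax)) =
        α * ((b₁ + b₂) / 2 * ((b₂ - b₁) / 2) * ((b₂ - b₁) / 2)) := by rw [h]; ring
    by_contra hle
    push_neg at hle
    nlinarith [h2, hApos, mul_nonneg (neg_nonneg.mpr hle) (mul_pos h1 hND).le]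
  have hψm : 0 < ψ m := lt_of_lt_of_le hψmid (hmax hmidmem)
  set ε := ψ m / 2 with hεdef
  have hεpos : 0 < ε := by positivity
  have hεlt : ε < ψ m := by linarith
  -- two intersection points via IVT
  obtain ⟨x, hx, hψx⟩ := intermediate_value_Icc hm.1
    (hcont.mono (Set.Icc_subset_Icc le_rfl hm.2))
    (by rw [hψb₁]; exact ⟨hεpos.le, hεlt.le⟩)
  obtain ⟨y, hy, hψy⟩ := intermediate_value_Icc' hm.2
    (hcont.mono (Set.Icc_subset_Icc hm.1 le_rfl))
    (by rw [hψb₂]; exact ⟨hεpos.le, hεlt.le⟩)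
  have hxmem : x ∈ Set.Icc b₁ b₂ := ⟨hx.1, le_trans hx.2 hm.2⟩
  have hymem : y ∈ Set.Icc b₁ b₂ := ⟨le_trans hm.1 hy.1, hy.2⟩
  have hxm : x < m := lt_of_le_of_ne hx.2 (by rintro rfl; rw [hψx] at hεlt; linarith)
  have hxy : x < y := lt_of_lt_of_le hxm hy.1
  -- the cubic polynomial
  set p : Polynomial ℝ :=
    Polynomial.C α * (Polynomial.X * (Polynomial.X - Polynomial.C b₁) *
      (Polynomial.X - Polynomial.C b₂)) +
    Polynomial.C (ε * (N * Dmax)) * (Polynomial.C K + Polynomial.X) with hpdef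
  have hPeval : ∀ z : ℝ, p.eval z =
      α * (z * (z - b₁) * (z - b₂)) + ε * (N * Dmax) * (K + z) := by
    intro z
    simp only [hpdef, Polynomial.eval_add, Polynomial.eval_mul, Polynomial.eval_sub,
      Polynomial.eval_C, Polynomial.eval_X]
    try ring
  have hroot : ∀ z : ℝ, K + z ≠ 0 → ψ z = ε → p.eval z = 0 := by
    intro z hz he
    rw [hPeval z]
    linear_combination hId z hz + (-(N * Dmax) * (K + z)) * he
  -- the negative root
  have hevalK : p.eval (-K) < 0 := by
    rw [hPeval]
    have h0 : α * ((-K) * (-K - b₁) * (-K - b₂)) + ε * (N * Dmax) * (K + -K) =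
        -(α * K * ((K + b₁) * (K + b₂))) := by ring
    rw [h0]
    have : 0 < α * K * ((K + b₁) * (K + b₂)) :=
      mul_pos (mul_pos hα hK) (mul_pos (by linarith) (by linarith))
    linarith
  have heval0 : 0 < p.eval 0 := by
    rw [hPeval]
    have h0 : α * ((0:ℝ) * (0 - b₁) * (0 - b₂)) + ε * (N * Dmax) * (K + 0) =
        ε * (N * Dmax) * K := by ring
    rw [h0]
    positivity
  obtain ⟨r, hr, hpr⟩ := intermediate_value_Icc (by linarith : -K ≤ (0:ℝ))
    (p.continuous.continuousOn)
    (⟨hevalK.le, heval0.le⟩ : (0:ℝ) ∈ Set.Icc (p.eval (-K)) (p.eval 0))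
  have hpr' : Polynomial.eval r p = 0 := hpr
  have hrneg : r < 0 := lt_of_le_of_ne hr.2
    (by rintro rfl; rw [hpr'] at heval0; linarith)
  -- p is nonzero of degree ≤ 3
  have hp0 : p ≠ 0 := by
    intro h; rw [h] at heval0; simp at heval0
  have hpdeg : p.natDegree ≤ 3 := by
    rw [hpdef]; compute_degree
  -- conclusion
  refine ⟨ε, hεpos, x, y, hxmem, hymem, hxy.ne, hψx, hψy, ?_⟩
  intro z hz hψz
  by_contra hcon
  push_neg at hcon
  obtain ⟨hzx, hzy⟩ := hcon
  have hrootx : p.eval x = 0 := hroot x (hKb x hxmem).ne' hψx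
  have hrooty : p.eval y = 0 := hroot y (hKb y hymem).ne' hψy
  have hrootz : p.eval z = 0 := hroot z (hKb z hz).ne' hψz
  have hzpos : 0 < z := lt_of_lt_of_le hb₁pos hz.1
  have hxpos : 0 < x := lt_of_lt_of_le hb₁pos hxmem.1
  have hypos : 0 < y := lt_of_lt_of_le hb₁pos hymem.1
  have hsub : ({r, x, y, z} : Finset ℝ) ⊆ p.roots.toFinset := by
    intro t ht
    rw [Multiset.mem_toFinset, Polynomial.mem_roots hp0]
    simp only [Finset.mem_insert, Finset.mem_singleton] at ht
    rcases ht with rfl | rfl | rfl | rfl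
    · exact hpr'
    · exact hrootx
    · exact hrooty
    · exact hrootz
  have hne1 : r ∉ ({x, y, z} : Finset ℝ) := by
    simp only [Finset.mem_insert, Finset.mem_singleton]
    push_neg
    exact ⟨by linarith, by linarith, by linarith⟩
  have hne2 : x ∉ ({y, z} : Finset ℝ) := by
    simp only [Finset.mem_insert, Finset.mem_singleton]
    push_neg
    exact ⟨hxy.ne, hzx.symm⟩
  have hne3 : y ∉ ({z} : Finset ℝ) := by
    simp only [Finset.mem_singleton]
    exact hzy.symm
  have hcard : ({r, x, y, z} : Finset ℝ).card = 4 := by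
    rw [Finset.card_insert_of_notMem hne1, Finset.card_insert_of_notMem hne2,
      Finset.card_insert_of_notMem hne3, Finset.card_singleton]
  have : 4 ≤ 3 := by
    calc 4 = ({r, x, y, z} : Finset ℝ).card := hcard.symm
    _ ≤ p.roots.toFinset.card := Finset.card_le_card hsub
    _ ≤ Multiset.card p.roots := p.roots.toFinset_card_le
    _ ≤ p.natDegree := p.card_roots'
    _ ≤ 3 := hpdeg
  omega
end

section
/- Consider the planar system under a viable therapy (D(u(t)) ∈ [α, D_max], M ≡ μ > 0). Suppose at some time t₀ the state (b(t₀), s(t₀)) lies in the success subset Ω̄₀ = {(b,s) : 0 ≤ s ≤ b < b₁*}. Then for all t ≥ t₀ the trajectory remains in Ω̄₀ and b(t) → 0, s(t) → 0 as t → ∞. -/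
set_option maxHeartbeats 1000000

open Set Filter

/-- If `f a ≤ 0` and `f' ≤ L f` wherever `f ≥ 0`, then `f ≤ 0` on `[a, b]`. -/
lemma nonpos_on_of_deriv_le {f f' : ℝ → ℝ} {L a b : ℝ}
    (hf : ∀ t, HasDerivAt f (f' t) t)
    (h0 : f a ≤ 0)
    (hL : ∀ t ∈ Icc a b, 0 ≤ f t → f' t ≤ L * f t) :
    ∀ t ∈ Icc a b, f t ≤ 0 := by
  intro t ht
  by_contra hpos
  push_neg at hpos
  have hcont : Continuous f := by
    apply continuous_iff_continuousAt.2
    exact fun u => (hf u).continuousAt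
  set Z := Icc a t ∩ {u | f u ≤ 0} with hZ
  have hZne : Z.Nonempty := ⟨a, ⟨le_refl a, ht.1⟩, h0⟩
  have hZbdd : BddAbove Z := ⟨t, fun u hu => hu.1.2⟩
  have hZclosed : IsClosed Z :=
    isClosed_Icc.inter (isClosed_le hcont continuous_const)
  set τ := sSup Z with hτ
  have hτZ : τ ∈ Z := hZclosed.csSup_mem hZne hZbdd
  have hfτ : f τ ≤ 0 := hτZ.2
  have hτt : τ < t := lt_of_le_of_ne hτZ.1.2 (fun h => absurd (h ▸ hfτ) (not_le.2 hpos))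
  have hpos' : ∀ u ∈ Ioc τ t, 0 < f u := by
    intro u hu
    by_contra h'
    push_neg at h'
    have huZ : u ∈ Z := ⟨⟨hτZ.1.1.trans hu.1.le, hu.2⟩, h'⟩
    exact absurd (le_csSup hZbdd huZ) (not_le.2 hu.1)
  have hfτ0 : 0 ≤ f τ := by
    have hcl : τ ∈ closure (Ioc τ t) := by
      rw [closure_Ioc hτt.ne]
      exact ⟨le_refl _, hτt.le⟩
    have hsub : Ioc τ t ⊆ {u | 0 ≤ f u} := fun u hu => (hpos' u hu).le
    have hclosed : IsClosed {u | 0 ≤ f u} := isClosed_le continuous_const hcont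
    exact hclosed.closure_subset_iff.2 hsub hcl
  have hfnn : ∀ u ∈ Icc τ t, 0 ≤ f u := by
    intro u hu
    rcases eq_or_lt_of_le hu.1 with rfl | h
    · exact hfτ0
    · exact (hpos' u ⟨h, hu.2⟩).le
  have hG := le_gronwallBound_of_liminf_deriv_right_le (f := f) (f' := f')
      (δ := 0) (K := L) (ε := 0) (a := τ) (b := t)
      hcont.continuousOn
      (fun x _ r hr => ((hf x).hasDerivWithinAt).liminf_right_slope_le hr)
      hfτ
      (fun x hx => by
        have h1 := hL x ⟨hτZ.1.1.trans hx.1, hx.2.le.trans ht.2⟩ (hfnn x ⟨hx.1, hx.2.le⟩)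
        linarith)
  have h2 := hG t ⟨hτt.le, le_refl t⟩
  rw [gronwallBound_ε0, zero_mul] at h2
  linarith

theorem success_subset_invariant_and_convergent
    (α β K N μ Dmax : ℝ) (hα : 0 < α) (hβ : 0 < β) (hK : 0 < K) (hN : 0 < N)
    (hμ : 0 < μ) (hDmax : α ≤ Dmax) (hβα : α < β) (hKN : K < N)
    (q n : ℝ) (hq : q = N / K) (hn : n = β / α)
    (hD : 0 < (q - 1) ^ 2 - 4 * q * (n - 1))
    (b₁ : ℝ)
    (hb₁ : b₁ = K / 2 * ((q - 1) - Real.sqrt ((q - 1) ^ 2 - 4 * q * (n - 1))))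
    (Du : ℝ → ℝ) (hDu : ∀ t, α ≤ Du t ∧ Du t ≤ Dmax)
    (b s : ℝ → ℝ)
    (hb : ∀ t : ℝ, HasDerivAt b
      (α * b t * (1 - b t / N) - (β * K / (K + b t)) * b t - Du t * s t) t)
    (hs : ∀ t : ℝ, HasDerivAt s
      (α * s t * (1 - b t / N) - (β * K / (K + b t)) * s t
        - Du t * s t - μ * s t) t)
    (t₀ : ℝ) (hinit : 0 ≤ s t₀ ∧ s t₀ ≤ b t₀ ∧ b t₀ < b₁) :
    (∀ t : ℝ, t₀ ≤ t → 0 ≤ s t ∧ s t ≤ b t ∧ b t < b₁) ∧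
      Filter.Tendsto b Filter.atTop (nhds 0) ∧
      Filter.Tendsto s Filter.atTop (nhds 0) := by
  have hcontb : Continuous b := continuous_iff_continuousAt.2 fun u => (hb u).continuousAt
  have hconts : Continuous s := continuous_iff_continuousAt.2 fun u => (hs u).continuousAt
  set S := Real.sqrt ((q - 1) ^ 2 - 4 * q * (n - 1)) with hSdef
  have hS0 : 0 ≤ S := Real.sqrt_nonneg _
  have hS2 : S ^ 2 = (q - 1) ^ 2 - 4 * q * (n - 1) := Real.sq_sqrt hD.le
  have hK' : (K:ℝ) ≠ 0 := hK.ne'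
  have hN' : (N:ℝ) ≠ 0 := hN.ne'
  have hα' : (α:ℝ) ≠ 0 := hα.ne'
  -- polynomial version of the discriminant relation
  have hS2'' : α * K ^ 2 * S ^ 2 = α * (N - K) ^ 2 - 4 * K * N * (β - α) := by
    rw [hS2, hq, hn]
    field_simp
  have hb₁' : b₁ = ((N - K) - K * S) / 2 := by
    rw [hb₁, hq]
    field_simp
  set b₂ : ℝ := ((N - K) + K * S) / 2 with hb₂def
  have hKS : 0 ≤ K * S := mul_nonneg hK.le hS0
  have hb₁pos : 0 < b₁ := by
    rw [hb₁']
    have hβα' : 0 < β - α := by linarith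
    nlinarith [hS2'', mul_pos (mul_pos hK hN) hβα', hKS, hα]
  have hb₁₂ : b₁ ≤ b₂ := by
    rw [hb₁', hb₂def]; linarith
  -- C(x) := α (1 - x/N) - βK/(K+x) is negative for 0 ≤ x < b₁
  have hC_neg : ∀ x : ℝ, 0 ≤ x → x < b₁ →
      α * (1 - x / N) - β * K / (K + x) < 0 := by
    intro x hx0 hxb
    have hKx : 0 < K + x := by linarith
    have e1 : α * (1 - x / N) - β * K / (K + x)
        = (α * (N - x) * (K + x) - β * K * N) / (N * (K + x)) := by
      field_simp
    rw [e1]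
    apply div_neg_of_neg_of_pos _ (mul_pos hN hKx)
    have hp1 : 0 < (N - K) - K * S - 2 * x := by
      rw [hb₁'] at hxb; linarith
    have hp2 : 0 < (N - K) + K * S - 2 * x := by linarith
    nlinarith [mul_pos hα (mul_pos hp1 hp2), hS2'']
  -- γ(x) < 0 on (0, b₁), ≤ 0 on [0, b₁)
  have hγ_neg : ∀ x : ℝ, 0 < x → x < b₁ →
      α * x * (1 - x / N) - (β * K / (K + x)) * x < 0 := by
    intro x hx0 hxb
    have hC := hC_neg x hx0.le hxb
    have heq : α * x * (1 - x / N) - (β * K / (K + x)) * x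
        = x * (α * (1 - x / N) - β * K / (K + x)) := by ring
    rw [heq]
    exact mul_neg_of_pos_of_neg hx0 hC
  have hγ_nonpos : ∀ x : ℝ, 0 ≤ x → x < b₁ →
      α * x * (1 - x / N) - (β * K / (K + x)) * x ≤ 0 := by
    intro x hx0 hxb
    rcases eq_or_lt_of_le hx0 with rfl | h
    · simp
    · exact (hγ_neg x h hxb).le
  -- upper bound on C along trajectories with b > -K
  set L : ℝ := α * (1 + K / N) with hLdef
  have hC_le : ∀ u : ℝ, -K < b u →
      α * (1 - b u / N) - β * K / (K + b u) ≤ L := by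
    intro u hu
    have hKb : 0 < K + b u := by linarith
    have hdivpos : 0 < β * K / (K + b u) := div_pos (mul_pos hβ hK) hKb
    have hbuN : 0 ≤ (K + b u) / N := div_nonneg (by linarith) hN.le
    have h1 : 1 - b u / N ≤ 1 + K / N := by
      have he : (K + b u) / N = K / N + b u / N := by ring
      rw [he] at hbuN
      linarith
    have h3 := mul_nonneg hα.le (sub_nonneg.2 h1)
    rw [hLdef]
    linarith [h3, hdivpos]
  -- MAIN INVARIANCE
  have main : ∀ t : ℝ, t₀ ≤ t → 0 ≤ s t ∧ s t ≤ b t ∧ b t ≤ b t₀ := by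
    by_contra hcon
    push_neg at hcon
    obtain ⟨t₁, ht₁, hQt₁⟩ : ∃ t₁, t₀ ≤ t₁ ∧ ¬(0 ≤ s t₁ ∧ s t₁ ≤ b t₁ ∧ b t₁ ≤ b t₀) := by
      obtain ⟨t₁, h1, h2⟩ := hcon
      refine ⟨t₁, h1, fun hQ => ?_⟩
      exact absurd (h2 hQ.1 hQ.2.1) (not_lt.2 hQ.2.2)
    set Bad := {u : ℝ | u ∈ Icc t₀ t₁ ∧ ¬(0 ≤ s u ∧ s u ≤ b u ∧ b u ≤ b t₀)} with hBadDef
    have hBadne : Bad.Nonempty := ⟨t₁, ⟨ht₁, le_refl _⟩, hQt₁⟩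
    have hBadbdd : BddBelow Bad := ⟨t₀, fun u hu => hu.1.1⟩
    set τ := sInf Bad with hτdef
    have hτt₀ : t₀ ≤ τ := le_csInf hBadne fun u hu => hu.1.1
    have hτt₁ : τ ≤ t₁ := csInf_le hBadbdd ⟨⟨ht₁, le_refl _⟩, hQt₁⟩
    have hQlt : ∀ u, t₀ ≤ u → u < τ → (0 ≤ s u ∧ s u ≤ b u ∧ b u ≤ b t₀) := by
      intro u hu0 huτ
      by_contra hQu
      exact absurd (csInf_le hBadbdd ⟨⟨hu0, huτ.le.trans hτt₁⟩, hQu⟩) (not_le.2 huτ)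
    have hQclosed : IsClosed {u : ℝ | 0 ≤ s u ∧ s u ≤ b u ∧ b u ≤ b t₀} := by
      have : {u : ℝ | 0 ≤ s u ∧ s u ≤ b u ∧ b u ≤ b t₀}
          = {u | 0 ≤ s u} ∩ ({u | s u ≤ b u} ∩ {u | b u ≤ b t₀}) := rfl
      rw [this]
      exact (isClosed_le continuous_const hconts).inter
        ((isClosed_le hconts hcontb).inter (isClosed_le hcontb continuous_const))
    have hQτ : 0 ≤ s τ ∧ s τ ≤ b τ ∧ b τ ≤ b t₀ := by
      rcases eq_or_lt_of_le hτt₀ with heq | hlt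
      · rw [← heq]; exact ⟨hinit.1, hinit.2.1, le_refl _⟩
      · have hsub : Ico t₀ τ ⊆ {u : ℝ | 0 ≤ s u ∧ s u ≤ b u ∧ b u ≤ b t₀} :=
          fun u hu => hQlt u hu.1 hu.2
        have hcl : τ ∈ closure (Ico t₀ τ) := by
          rw [closure_Ico hlt.ne]
          exact ⟨hlt.le, le_refl _⟩
        exact hQclosed.closure_subset_iff.2 hsub hcl
    -- a window to the right of τ where -K < b < b₁
    have hbτ0 : 0 ≤ b τ := hQτ.1.trans hQτ.2.1
    have hU : IsOpen (b ⁻¹' Ioo (-K) b₁) := isOpen_Ioo.preimage hcontb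
    have hτU : τ ∈ b ⁻¹' Ioo (-K) b₁ :=
      ⟨by linarith, lt_of_le_of_lt hQτ.2.2 hinit.2.2⟩
    obtain ⟨ε, hε, hball⟩ := Metric.isOpen_iff.1 hU τ hτU
    obtain ⟨t', ht'Bad, ht'lt⟩ := (csInf_lt_iff hBadbdd hBadne).1
      (show sInf Bad < τ + ε by rw [← hτdef]; linarith)
    have hτt' : τ ≤ t' := csInf_le hBadbdd ht'Bad
    have hwin : ∀ u ∈ Icc τ t', -K < b u ∧ b u < b₁ := by
      intro u hu
      have : dist u τ < ε := by
        rw [Real.dist_eq, abs_of_nonneg (sub_nonneg.2 hu.1)]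
        linarith [hu.2]
      exact hball this
    -- Step 1: s ≥ 0 on [τ, t']
    have hstep1 : ∀ u ∈ Icc τ t', 0 ≤ s u := by
      have h := nonpos_on_of_deriv_le (f := fun u => -s u)
        (f' := fun u => (α * (1 - b u / N) - β * K / (K + b u) - Du u - μ) * (-s u))
        (L := L) (a := τ) (b := t')
        (fun u => by
          have hd := (hs u).neg
          exact hd.congr_deriv (by ring))
        (by simpa using hQτ.1)
        (fun u hu hfu => by
          have hA : α * (1 - b u / N) - β * K / (K + b u) - Du u - μ ≤ L := by
            have h1 := hC_le u (hwin u hu).1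
            have h2 := (hDu u).1
            linarith
          exact mul_le_mul_of_nonneg_right hA hfu)
      intro u hu
      have h2 := h u hu
      linarith
    -- Step 2: s ≤ b on [τ, t']
    have hstep2 : ∀ u ∈ Icc τ t', s u ≤ b u := by
      have h := nonpos_on_of_deriv_le (f := fun u => s u - b u)
        (f' := fun u => (α * (1 - b u / N) - β * K / (K + b u)) * (s u - b u) - μ * s u)
        (L := L) (a := τ) (b := t')
        (fun u => by
          have hd := (hs u).sub (hb u)
          exact hd.congr_deriv (by ring))
        (by simp only [sub_nonpos]; exact hQτ.2.1)
        (fun u hu hfu => by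
          have hCle := hC_le u (hwin u hu).1
          have hsu := hstep1 u hu
          have h1 : (α * (1 - b u / N) - β * K / (K + b u)) * (s u - b u)
              ≤ L * (s u - b u) := mul_le_mul_of_nonneg_right hCle hfu
          have h2 : 0 ≤ μ * s u := mul_nonneg hμ.le hsu
          linarith)
      intro u hu
      have h2 := h u hu
      linarith
    -- combined invariant on [t₀, t']
    have ht₀t' : t₀ ≤ t' := hτt₀.trans hτt'
    have hI : ∀ u ∈ Icc t₀ t', 0 ≤ s u ∧ s u ≤ b u ∧ b u < b₁ := by
      intro u hu
      rcases le_or_gt u τ with h | h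
      · rcases eq_or_lt_of_le h with rfl | h'
        · exact ⟨hQτ.1, hQτ.2.1, lt_of_le_of_lt hQτ.2.2 hinit.2.2⟩
        · have := hQlt u hu.1 h'
          exact ⟨this.1, this.2.1, lt_of_le_of_lt this.2.2 hinit.2.2⟩
      · have hu' : u ∈ Icc τ t' := ⟨h.le, hu.2⟩
        exact ⟨hstep1 u hu', hstep2 u hu', (hwin u hu').2⟩
    -- b is nonincreasing on [t₀, t']
    have hanti : AntitoneOn b (Icc t₀ t') := by
      apply antitoneOn_of_deriv_nonpos (convex_Icc _ _) hcontb.continuousOn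
        (fun x _ => (hb x).differentiableAt.differentiableWithinAt)
      intro x hx
      rw [interior_Icc] at hx
      have hIx := hI x ⟨hx.1.le, hx.2.le⟩
      rw [(hb x).deriv]
      have hbx0 : 0 ≤ b x := hIx.1.trans hIx.2.1
      have hg := hγ_nonpos (b x) hbx0 hIx.2.2
      have hDus : 0 ≤ Du x * s x := mul_nonneg (hα.le.trans (hDu x).1) hIx.1
      linarith
    have hbt' : b t' ≤ b t₀ :=
      hanti ⟨le_refl _, ht₀t'⟩ ⟨ht₀t', le_refl _⟩ ht₀t'
    exact ht'Bad.2 ⟨hstep1 t' ⟨hτt', le_refl _⟩, hstep2 t' ⟨hτt', le_refl _⟩, hbt'⟩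
  -- global monotonicity of b
  have hanti : AntitoneOn b (Ici t₀) := by
    apply antitoneOn_of_deriv_nonpos (convex_Ici _) hcontb.continuousOn
      (fun x _ => (hb x).differentiableAt.differentiableWithinAt)
    intro x hx
    rw [interior_Ici] at hx
    have hIx := main x hx.le
    rw [(hb x).deriv]
    have hbx0 : 0 ≤ b x := hIx.1.trans hIx.2.1
    have hg := hγ_nonpos (b x) hbx0 (lt_of_le_of_lt hIx.2.2 hinit.2.2)
    have hDus : 0 ≤ Du x * s x := mul_nonneg (hα.le.trans (hDu x).1) hIx.1
    linarith
  -- b tends to 0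
  have htb : Tendsto b atTop (nhds 0) := by
    rw [Metric.tendsto_atTop]
    intro ε hε
    by_cases hex : ∃ T, t₀ ≤ T ∧ b T < ε
    · obtain ⟨T, hT, hbT⟩ := hex
      refine ⟨T, fun t ht => ?_⟩
      have h1 : b t ≤ b T := hanti (mem_Ici.2 hT) (mem_Ici.2 (hT.trans ht)) ht
      have h2 : 0 ≤ b t := (main t (hT.trans ht)).1.trans (main t (hT.trans ht)).2.1
      rw [Real.dist_eq, sub_zero, abs_of_nonneg h2]
      linarith
    · exfalso
      push_neg at hex
      have hεb : ε ≤ b t₀ := hex t₀ (le_refl _)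
      have hcontγ : ContinuousOn
          (fun x => α * x * (1 - x / N) - (β * K / (K + x)) * x) (Icc ε (b t₀)) := by
        apply ContinuousOn.sub
        · exact ((continuous_const.mul continuous_id).mul
            (continuous_const.sub (continuous_id.div_const N))).continuousOn
        · apply ContinuousOn.mul _ continuousOn_id
          apply ContinuousOn.div continuousOn_const
            (continuousOn_const.add continuousOn_id)
          intro x hx
          have : 0 < K + x := by
            have := hx.1; linarith
          exact this.ne'
      obtain ⟨x₀, hx₀mem, hx₀max⟩ := isCompact_Icc.exists_isMaxOn
        (Set.nonempty_Icc.2 hεb) hcontγ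
      set c := -(α * x₀ * (1 - x₀ / N) - (β * K / (K + x₀)) * x₀) with hcdef
      have hc : 0 < c := by
        rw [hcdef]
        exact neg_pos.2 (hγ_neg x₀ (lt_of_lt_of_le hε hx₀mem.1)
          (lt_of_le_of_lt hx₀mem.2 hinit.2.2))
      have hgderiv : ∀ x : ℝ, HasDerivAt (fun t => b t + c * t)
          ((α * b x * (1 - b x / N) - (β * K / (K + b x)) * b x - Du x * s x) + c) x := by
        intro x
        have h1 : HasDerivAt (fun t : ℝ => c * t) c x := by
          simpa using (hasDerivAt_id x).const_mul c
        exact (hb x).add h1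
      have hganti : AntitoneOn (fun t => b t + c * t) (Ici t₀) := by
        apply antitoneOn_of_deriv_nonpos (convex_Ici _)
          (continuous_iff_continuousAt.2 fun x => (hgderiv x).continuousAt).continuousOn
          (fun x _ => (hgderiv x).differentiableAt.differentiableWithinAt)
        intro x hx
        rw [interior_Ici] at hx
        rw [(hgderiv x).deriv]
        have hmain := main x hx.le
        have hbx : b x ∈ Icc ε (b t₀) := ⟨hex x hx.le, hmain.2.2⟩
        have hmax := hx₀max hbx
        have hDus : 0 ≤ Du x * s x := mul_nonneg (hα.le.trans (hDu x).1) hmain.1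
        simp only [mem_setOf_eq] at hmax
        rw [hcdef]
        linarith
      set T := t₀ + (b t₀ + 1) / c with hTdef
      have hbt₀pos : 0 < b t₀ := lt_of_lt_of_le hε hεb
      have hT : t₀ ≤ T := by
        rw [hTdef]
        have : 0 ≤ (b t₀ + 1) / c := div_nonneg (by linarith) hc.le
        linarith
      have hg := hganti (mem_Ici.2 (le_refl _)) (mem_Ici.2 hT) hT
      simp only at hg
      have hcT : c * ((b t₀ + 1) / c) = b t₀ + 1 := mul_div_cancel₀ _ hc.ne'
      have hbT : ε ≤ b T := hex T hT
      have : c * T = c * t₀ + (b t₀ + 1) := by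
        rw [hTdef]; rw [mul_add, hcT]
      linarith
  -- s tends to 0 by squeezing
  have hts : Tendsto s atTop (nhds 0) := by
    apply tendsto_of_tendsto_of_tendsto_of_le_of_le' tendsto_const_nhds htb
    · exact (eventually_ge_atTop t₀).mono fun t ht => (main t ht).1
    · exact (eventually_ge_atTop t₀).mono fun t ht => (main t ht).2.1
  exact ⟨fun t ht => ⟨(main t ht).1, (main t ht).2.1,
    lt_of_le_of_lt (main t ht).2.2 hinit.2.2⟩, htb, hts⟩
end
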